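/- Let Z_1,…,Z_n be i.i.d. standard complex-normal-like real white noise and τ ≥ 1. The covariance of tapered DFT coefficients of a white noise at Fourier frequencies λ_j, λ_k satisfies E[D^Z_τ(λ_j) conj(D^Z_τ(λ_k))] = 0 whenever |j − k| > τ, and equals (2π a_τ)^{−1}(−1)^{k−j} binom(2τ, τ + (k−j)) σ²/n-normalized when |j − k| ≤ τ. -/

import Mathlib

open Real MeasureTheory Finset

lemma sum_exp_aux (n : ℕ) (hn : 0 < n) (r : ℤ) (hr : |r| < n) :
    ∑ t ∈ Icc 1 n, Complex.exp (2 * π * Complex.I * t * r / n) =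
      if r = 0 then (n : ℂ) else 0 := by
  by_cases h0 : r = 0
  · simp [h0]
  · rw [if_neg h0]
    have hne : (n : ℂ) ≠ 0 := Nat.cast_ne_zero.2 hn.ne'
    set ζ : ℂ := Complex.exp (2 * π * Complex.I * r / n) with hζ
    have hterm : ∀ t : ℕ, Complex.exp (2 * π * Complex.I * t * r / n) = ζ ^ t := by
      intro t
      rw [hζ, ← Complex.exp_nat_mul]
      ring_nf
    have hζn : ζ ^ n = 1 := by
      rw [hζ, ← Complex.exp_nat_mul]
      have : (n : ℂ) * (2 * π * Complex.I * r / n) = r * (2 * π * Complex.I) := by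
        field_simp
      rw [this, Complex.exp_int_mul, Complex.exp_two_pi_mul_I, one_zpow]
    have hζ1 : ζ ≠ 1 := by
      intro h1
      rw [hζ, Complex.exp_eq_one_iff] at h1
      obtain ⟨m, hm⟩ := h1
      have h2 : (r : ℂ) = m * n := by
        have h2pi : (2 * π * Complex.I : ℂ) ≠ 0 := by
          simp [Real.pi_ne_zero, Complex.I_ne_zero, Complex.ofReal_ne_zero]
        field_simp at hm
        have : (r : ℂ) * (2 * ↑π * Complex.I) = (m * n) * (2 * ↑π * Complex.I) := by
          rw [show (r:ℂ) * (2 * ↑π * Complex.I) = 2 * ↑π * Complex.I * ↑r by ring, hm]; ring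
        exact mul_right_cancel₀ h2pi this
      have h3 : r = m * n := by exact_mod_cast h2
      have : r = 0 := Int.eq_zero_of_abs_lt_dvd ⟨m, by rw [h3]; ring⟩ hr
      exact h0 this
    calc ∑ t ∈ Icc 1 n, Complex.exp (2 * π * Complex.I * t * r / n)
        = ∑ t ∈ range n, ζ ^ (t + 1) := by
          rw [← Finset.Ico_add_one_right_eq_Icc, Finset.sum_Ico_eq_sum_range]
          refine Finset.sum_congr (by norm_num) fun t _ => by rw [hterm (1 + t), add_comm]
      _ = ζ * ∑ t ∈ range n, ζ ^ t := by
          rw [Finset.mul_sum]; exact Finset.sum_congr rfl fun t _ => by ring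
      _ = 0 := by rw [geom_sum_eq hζ1, hζn]; simp


lemma term_eq (n τ : ℕ) (hn0 : 0 < n) (j k : ℕ) (t : ℕ) :
    (1 - Complex.exp (2 * π * Complex.I * t / n)) ^ τ *
      (1 - Complex.exp (-(2 * π * Complex.I * t / n))) ^ τ *
      Complex.exp (2 * π * Complex.I * t * j / n) *
      Complex.exp (-(2 * π * Complex.I * t * k / n)) =
    ∑ m ∈ range (2 * τ + 1), ((-1 : ℂ) ^ (τ + m) * (Nat.choose (2 * τ) m : ℂ)) *
      Complex.exp (2 * π * Complex.I * t * ((((m : ℤ) + j - k - τ) : ℤ) : ℂ) / n) := by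
  set θ : ℂ := 2 * π * Complex.I * t / n with hθ
  set x : ℂ := Complex.exp θ with hxdef
  have hx : x ≠ 0 := Complex.exp_ne_zero θ
  have hinv : Complex.exp (-θ) = x⁻¹ := by rw [hxdef, Complex.exp_neg]
  have hE : ∀ r : ℤ, Complex.exp (2 * π * Complex.I * t * (r : ℂ) / n) = x ^ r := by
    intro r
    rw [hxdef, ← Complex.exp_int_mul]
    congr 1
    rw [hθ]; ring
  have hEn : ∀ r : ℕ, Complex.exp (2 * π * Complex.I * t * (r : ℂ) / n) = x ^ r := by
    intro r
    have := hE (r : ℤ)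
    push_cast at this
    rw [this, zpow_natCast]
  have h1 : (1 - x) ^ τ * (1 - x⁻¹) ^ τ = (-1) ^ τ * (x⁻¹) ^ τ * (1 - x) ^ (2 * τ) := by
    have hq : (1 - x) * (1 - x⁻¹) = (-1) * x⁻¹ * (1 - x) ^ 2 := by
      field_simp
      ring
    calc (1 - x) ^ τ * (1 - x⁻¹) ^ τ = ((1 - x) * (1 - x⁻¹)) ^ τ := by rw [mul_pow]
      _ = ((-1) * x⁻¹ * (1 - x) ^ 2) ^ τ := by rw [hq]
      _ = (-1) ^ τ * (x⁻¹) ^ τ * (1 - x) ^ (2 * τ) := by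
          rw [mul_pow, mul_pow, ← pow_mul, mul_comm 2 τ]
  have hbin : (1 - x) ^ (2 * τ) =
      ∑ m ∈ range (2 * τ + 1), (-1 : ℂ) ^ m * x ^ m * (Nat.choose (2 * τ) m : ℂ) := by
    have hap := add_pow (-x) 1 (2 * τ)
    rw [show (1 : ℂ) - x = -x + 1 by ring, hap]
    exact Finset.sum_congr rfl fun m _ => by rw [neg_pow]; ring
  rw [hEn j, Complex.exp_neg, Complex.exp_neg, hEn k, h1, hbin, Finset.mul_sum, Finset.sum_mul,
    Finset.sum_mul]
  refine Finset.sum_congr rfl fun m _ => ?_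
  rw [hE, show ((m : ℤ) + j - k - τ) = ((m + j : ℕ) : ℤ) - ((k + τ : ℕ) : ℤ) by
    push_cast; ring, zpow_sub₀ hx, zpow_natCast, zpow_natCast, pow_add]
  field_simp
  rw [div_pow, one_pow, pow_add, pow_add]; field_simp

lemma key_sum (n τ : ℕ) (hn : 2 * τ < n) (hτ : 1 ≤ τ) (j k : ℕ)
    (hj : 1 ≤ j) (hk : 1 ≤ k) (hj2 : j ≤ (n - 1) / 2) (hk2 : k ≤ (n - 1) / 2) :
    ∑ t ∈ Icc 1 n, (1 - Complex.exp (2 * π * Complex.I * t / n)) ^ τ *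
        (1 - Complex.exp (-(2 * π * Complex.I * t / n))) ^ τ *
        Complex.exp (2 * π * Complex.I * t * j / n) *
        Complex.exp (-(2 * π * Complex.I * t * k / n)) =
      if |(j : ℤ) - k| ≤ (τ : ℤ) then
        (n : ℂ) * (-1) ^ ((k : ℤ) - j) * (Nat.choose (2 * τ) (((τ : ℤ) + k - j).toNat) : ℂ)
      else 0 := by
  have hn0 : 0 < n := by omega
  calc ∑ t ∈ Icc 1 n, (1 - Complex.exp (2 * π * Complex.I * t / n)) ^ τ *
        (1 - Complex.exp (-(2 * π * Complex.I * t / n))) ^ τ *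
        Complex.exp (2 * π * Complex.I * t * j / n) *
        Complex.exp (-(2 * π * Complex.I * t * k / n))
      = ∑ t ∈ Icc 1 n, ∑ m ∈ range (2 * τ + 1),
          ((-1 : ℂ) ^ (τ + m) * (Nat.choose (2 * τ) m : ℂ)) *
          Complex.exp (2 * π * Complex.I * t * ((((m : ℤ) + j - k - τ) : ℤ) : ℂ) / n) :=
        Finset.sum_congr rfl fun t _ => term_eq n τ hn0 j k t
    _ = ∑ m ∈ range (2 * τ + 1),
          ((-1 : ℂ) ^ (τ + m) * (Nat.choose (2 * τ) m : ℂ)) *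
          ∑ t ∈ Icc 1 n,
            Complex.exp (2 * π * Complex.I * t * ((((m : ℤ) + j - k - τ) : ℤ) : ℂ) / n) := by
        rw [Finset.sum_comm]
        exact Finset.sum_congr rfl fun m _ => by rw [Finset.mul_sum]
    _ = ∑ m ∈ range (2 * τ + 1),
          ((-1 : ℂ) ^ (τ + m) * (Nat.choose (2 * τ) m : ℂ)) *
          (if ((m : ℤ) + j - k - τ) = 0 then (n : ℂ) else 0) := by
        refine Finset.sum_congr rfl fun m hm => ?_
        rw [sum_exp_aux n hn0 _ (by
          simp only [Finset.mem_range] at hm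
          have h1 : τ ≤ (n-1)/2 := by omega
          rw [abs_lt]
          omega)]
    _ = _ := by
        by_cases hc : |(j : ℤ) - k| ≤ (τ : ℤ)
        · rw [if_pos hc]
          set m₀ : ℕ := ((τ : ℤ) + k - j).toNat with hm₀
          have hm₀v : (m₀ : ℤ) = (τ : ℤ) + k - j := by
            rw [hm₀]; rw [Int.toNat_of_nonneg (by
              rw [abs_le] at hc; omega)]
          have hm₀mem : m₀ ∈ range (2 * τ + 1) := by
            simp only [Finset.mem_range]
            rw [abs_le] at hc; omega
          rw [Finset.sum_eq_single m₀]
          · rw [if_pos (by omega)]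
            have hsgn : ((-1 : ℂ)) ^ ((k : ℤ) - j) = (-1) ^ (τ + m₀) := by
              have : (k : ℤ) - j = ((τ + m₀ : ℕ) : ℤ) - ((2 * τ : ℕ) : ℤ) := by
                push_cast; omega
              rw [this, zpow_sub₀ (by norm_num : (-1 : ℂ) ≠ 0), zpow_natCast,
                zpow_natCast, pow_mul]
              norm_num
            rw [hsgn]; ring
          · intro m hm hne
            rw [if_neg (by
              simp only [Finset.mem_range] at hm
              intro h0
              apply hne
              omega), mul_zero]
          · intro habs
            exact absurd hm₀mem habs
        · rw [if_neg hc]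
          refine Finset.sum_eq_zero fun m hm => ?_
          rw [if_neg (by
            simp only [Finset.mem_range] at hm
            rw [abs_le] at hc
            push_neg at hc
            omega), mul_zero]


/-- Covariance structure of tapered DFT coefficients of a real white noise:
with `D^Z_τ(λ) = (2πn a_τ)^{−1/2} Σ_{t=1}^n h_t^τ Z_t e^{itλ}`,
`h_t = 1 − e^{2πit/n}`, `a_τ = n^{−1} Σ_t |h_t|^{2τ}`, the covariance
`E[D^Z_τ(λ_j) conj(D^Z_τ(λ_k))]` vanishes when `|j − k| > τ` and equals
`(2π a_τ)^{−1} σ² (−1)^{k−j} C(2τ, τ+(k−j))` when `|j − k| ≤ τ`. -/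
theorem tapered_dft_white_noise_covariance
    {Ω : Type*} [MeasurableSpace Ω] (μ : Measure Ω) [IsProbabilityMeasure μ]
    (Z : ℕ → Ω → ℝ) (σ : ℝ) (n τ : ℕ) (hn : 2 * τ < n) (hτ : 1 ≤ τ)
    (hZmeas : ∀ t, Measurable (Z t))
    (hZ2 : ∀ s t, Integrable (fun ω => Z s ω * Z t ω) μ)
    (hmean : ∀ t, ∫ ω, Z t ω ∂μ = 0)
    (huncorr : ∀ s t, s ≠ t → ∫ ω, Z s ω * Z t ω ∂μ = 0)
    (hvar : ∀ t, ∫ ω, Z t ω ^ 2 ∂μ = σ ^ 2)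
    (h : ℕ → ℂ) (hh : ∀ t, h t = 1 - Complex.exp (2 * π * Complex.I * t / n))
    (a : ℝ) (ha : a = (n : ℝ)⁻¹ * ∑ t ∈ Finset.Icc 1 n, ‖h t‖ ^ (2 * τ))
    (D : ℝ → Ω → ℂ)
    (hD : ∀ lam ω, D lam ω = (Real.sqrt (2 * π * n * a))⁻¹ *
      ∑ t ∈ Finset.Icc 1 n, (h t) ^ τ * (Z t ω : ℂ) * Complex.exp (Complex.I * t * lam))
    (j k : ℕ) (hj : 1 ≤ j) (hk : 1 ≤ k)
    (hj2 : j ≤ (n - 1) / 2) (hk2 : k ≤ (n - 1) / 2) :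
    ((τ : ℤ) < |(j : ℤ) - k| →
      ∫ ω, D (2 * π * j / n) ω * (starRingEnd ℂ) (D (2 * π * k / n) ω) ∂μ = 0) ∧
    (|(j : ℤ) - k| ≤ (τ : ℤ) →
      ∫ ω, D (2 * π * j / n) ω * (starRingEnd ℂ) (D (2 * π * k / n) ω) ∂μ
        = ((2 * π * a)⁻¹ * σ ^ 2 : ℝ) * (-1) ^ ((k : ℤ) - j) *
            (Nat.choose (2 * τ) ((τ + (k : ℤ) - j).toNat) : ℂ)) := by
  have hn0 : 0 < n := by omega
  set c : ℝ := (Real.sqrt (2 * π * n * a))⁻¹ with hc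
  set g : ℕ → ℕ → ℂ := fun s t => (c : ℂ) * c *
      ((h s) ^ τ * Complex.exp (Complex.I * s * ((2 * π * j / n : ℝ) : ℂ)) *
       (starRingEnd ℂ (h t)) ^ τ *
       Complex.exp (-(Complex.I * t * ((2 * π * k / n : ℝ) : ℂ)))) with hg
  -- pointwise product formula
  have hpt : ∀ ω, D (2 * π * j / n) ω * (starRingEnd ℂ) (D (2 * π * k / n) ω) =
      ∑ s ∈ Finset.Icc 1 n, ∑ t ∈ Finset.Icc 1 n,
        g s t * ((Z s ω * Z t ω : ℝ) : ℂ) := by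
    intro ω
    rw [hD, hD, map_mul, map_sum]
    have hconjc : (starRingEnd ℂ) ((c : ℝ) : ℂ) = (c : ℂ) := Complex.conj_ofReal c
    rw [hconjc, mul_mul_mul_comm, Finset.sum_mul_sum]
    rw [Finset.mul_sum]
    refine Finset.sum_congr rfl fun s _ => ?_
    rw [Finset.mul_sum]
    refine Finset.sum_congr rfl fun t _ => ?_
    have hconjterm : (starRingEnd ℂ) ((h t) ^ τ * (Z t ω : ℂ) *
        Complex.exp (Complex.I * t * ((2 * π * k / n : ℝ) : ℂ))) =
        (starRingEnd ℂ (h t)) ^ τ * (Z t ω : ℂ) *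
          Complex.exp (-(Complex.I * t * ((2 * π * k / n : ℝ) : ℂ))) := by
      rw [map_mul, map_mul, map_pow, ← Complex.exp_conj]
      congr 2
      · exact Complex.conj_ofReal _
      · rw [map_mul, map_mul, Complex.conj_I, Complex.conj_ofReal,
          Complex.conj_natCast]
        ring
    rw [hconjterm, hg]
    push_cast
    ring
  rw [show (fun ω => D (2 * π * j / n) ω * (starRingEnd ℂ) (D (2 * π * k / n) ω)) =
      fun ω => ∑ s ∈ Finset.Icc 1 n, ∑ t ∈ Finset.Icc 1 n,
        g s t * ((Z s ω * Z t ω : ℝ) : ℂ) from funext hpt]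
  have hint : ∀ s t, Integrable (fun ω => g s t * ((Z s ω * Z t ω : ℝ) : ℂ)) μ :=
    fun s t => ((hZ2 s t).ofReal).const_mul _
  rw [integral_finset_sum _ (fun s _ => integrable_finset_sum _ (fun t _ => hint s t))]
  have hstep : ∀ s ∈ Finset.Icc 1 n,
      (∫ ω, ∑ t ∈ Finset.Icc 1 n, g s t * ((Z s ω * Z t ω : ℝ) : ℂ) ∂μ)
        = g s s * (σ ^ 2 : ℝ) := by
    intro s hs
    rw [integral_finset_sum _ (fun t _ => hint s t)]
    rw [Finset.sum_eq_single_of_mem s hs]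
    · rw [integral_const_mul,
        show (∫ ω, ((Z s ω * Z s ω : ℝ) : ℂ) ∂μ) = ((∫ ω, Z s ω * Z s ω ∂μ : ℝ) : ℂ)
          from integral_ofReal]
      have : (∫ ω, Z s ω * Z s ω ∂μ) = σ ^ 2 := by
        rw [← hvar s]
        exact integral_congr_ae (Filter.Eventually.of_forall fun ω => (sq (Z s ω)).symm)
      rw [this]
    · intro t _ hts
      rw [integral_const_mul,
        show (∫ ω, ((Z s ω * Z t ω : ℝ) : ℂ) ∂μ) = ((∫ ω, Z s ω * Z t ω ∂μ : ℝ) : ℂ)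
          from integral_ofReal, huncorr s t (fun e => hts e.symm)]
      simp
  rw [Finset.sum_congr rfl hstep, ← Finset.sum_mul]
  -- identify ∑ g s s with the key sum
  have hgss : ∑ s ∈ Finset.Icc 1 n, g s s = ((c : ℂ) * c) *
      (if |(j : ℤ) - k| ≤ (τ : ℤ) then
        (n : ℂ) * (-1) ^ ((k : ℤ) - j) * (Nat.choose (2 * τ) (((τ : ℤ) + k - j).toNat) : ℂ)
      else 0) := by
    rw [← key_sum n τ hn hτ j k hj hk hj2 hk2, Finset.mul_sum]
    refine Finset.sum_congr rfl fun s _ => ?_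
    simp only [hg, hh]
    have hcr : (starRingEnd ℂ) (1 - Complex.exp (2 * π * Complex.I * s / n)) =
        1 - Complex.exp (-(2 * π * Complex.I * s / n)) := by
      rw [map_sub, map_one, ← Complex.exp_conj]
      congr 2
      simp [map_div₀, Complex.conj_I, map_ofNat]
      ring
    rw [hcr]
    have he1 : Complex.exp (Complex.I * s * ((2 * π * j / n : ℝ) : ℂ)) =
        Complex.exp (2 * π * Complex.I * s * j / n) := by
      congr 1; push_cast; ring
    have he2 : Complex.exp (-(Complex.I * s * ((2 * π * k / n : ℝ) : ℂ))) =
        Complex.exp (-(2 * π * Complex.I * s * k / n)) := by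
      congr 1; push_cast; ring
    rw [he1, he2]
    ring
  rw [hgss]
  have hanneg : 0 ≤ 2 * π * n * a := by
    have : 0 ≤ a := by
      rw [ha]
      positivity
    positivity
  have hcc : (c : ℂ) * c = (((2 * π * n * a)⁻¹ : ℝ) : ℂ) := by
    rw [← Complex.ofReal_mul]
    congr 1
    rw [hc, ← mul_inv, Real.mul_self_sqrt hanneg]
  rw [hcc]
  constructor
  · intro hlt
    rw [if_neg (not_le.mpr hlt)]
    simp
  · intro hle
    rw [if_pos hle]
    have hreal : ((2 * π * (n : ℝ) * a)⁻¹ : ℝ) * (n : ℝ) = (2 * π * a)⁻¹ := by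
      rcases eq_or_ne a 0 with rfl | ha0
      · simp
      · have hπ : (π : ℝ) ≠ 0 := Real.pi_ne_zero
        have hnn : (n : ℝ) ≠ 0 := Nat.cast_ne_zero.2 hn0.ne'
        field_simp
    calc (((2 * π * (n : ℝ) * a)⁻¹ : ℝ) : ℂ) *
          ((n : ℂ) * (-1) ^ ((k : ℤ) - j) *
            (Nat.choose (2 * τ) (((τ : ℤ) + k - j).toNat) : ℂ)) * ((σ ^ 2 : ℝ) : ℂ)
        = ((((2 * π * (n : ℝ) * a)⁻¹ : ℝ) * (n : ℝ) : ℝ) : ℂ) * ((σ ^ 2 : ℝ) : ℂ) *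
            (-1) ^ ((k : ℤ) - j) *
            (Nat.choose (2 * τ) (((τ : ℤ) + k - j).toNat) : ℂ) := by
          push_cast
          ring
      _ = _ := by
          rw [hreal]
          push_cast
          ring
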